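/- Let Σ be a compact connected n-dimensional smooth submanifold of ℝ^{n+m} without boundary, f a positive smooth function on Σ with ∫_Σ f dvol = 1, α defined by ∫_Σ f log f dvol − ∫_Σ |∇^Σ f|²/f dvol − ∫_Σ f |H|² dvol = −α, and u a smooth solution of div_Σ(f ∇^Σ u) = f log f − |∇^Σ f|²/f − f |H|² + α f. Then for every x ∈ Σ and every y ∈ T_x^⊥Σ, Δ_Σ u(x) − ⟨H(x), y⟩ ≤ log f(x) − |2H(x)+y|²/4 + (|∇^Σ u(x)|² + |y|²)/4 + α. -/

import Mathlib

open MeasureTheory Real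
open scoped RealInnerProductSpace ENNReal

noncomputable section

variable {N : ℕ}

/-- The tangent space of a set `S ⊆ ℝ^N` at a point `x`, defined as the span of all
velocity vectors at `x` of curves lying in `S` and passing through `x` at time `0`.
For a smooth embedded submanifold this is the usual tangent space. -/
def tangentSpaceAt (S : Set (EuclideanSpace ℝ (Fin N))) (x : EuclideanSpace ℝ (Fin N)) :
    Submodule ℝ (EuclideanSpace ℝ (Fin N)) :=
  Submodule.span ℝ {v | ∃ γ : ℝ → EuclideanSpace ℝ (Fin N),
    (∀ t, γ t ∈ S) ∧ γ 0 = x ∧ HasDerivAt γ v 0}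

/-- The orthogonal projection of the ambient space onto the tangent space of `S` at `x`,
viewed as a continuous linear endomorphism of the ambient space. -/
def tproj (S : Set (EuclideanSpace ℝ (Fin N))) (x : EuclideanSpace ℝ (Fin N)) :
    EuclideanSpace ℝ (Fin N) →L[ℝ] EuclideanSpace ℝ (Fin N) :=
  (tangentSpaceAt S x).subtypeL.comp (Submodule.orthogonalProjection (tangentSpaceAt S x))

/-- The tangential gradient `∇^Σ f` of a function along `S`. -/
def tgrad (S : Set (EuclideanSpace ℝ (Fin N))) (f : EuclideanSpace ℝ (Fin N) → ℝ)
    (x : EuclideanSpace ℝ (Fin N)) : EuclideanSpace ℝ (Fin N) :=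
  tproj S x (gradient f x)

/-- The (vector-valued) second fundamental form `II(x)(v,w)` of `S` at `x`, defined as the
normal component of the derivative along `S`, in the direction `v`, of the tangent vector
field `y ↦ P_y w` (the tangential projection of the constant vector field `w`). -/
def secondFF (S : Set (EuclideanSpace ℝ (Fin N))) (x v w : EuclideanSpace ℝ (Fin N)) :
    EuclideanSpace ℝ (Fin N) :=
  fderivWithin ℝ (fun y => tproj S y w) S x v
    - tproj S x (fderivWithin ℝ (fun y => tproj S y w) S x v)

/-- The mean curvature vector `H(x)` of `S` at `x`: the trace of the second fundamental
form, computed in an orthonormal basis of the tangent space. -/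
def meanCurvature (S : Set (EuclideanSpace ℝ (Fin N))) (x : EuclideanSpace ℝ (Fin N)) :
    EuclideanSpace ℝ (Fin N) :=
  ∑ i, secondFF S x (stdOrthonormalBasis ℝ (tangentSpaceAt S x) i : EuclideanSpace ℝ (Fin N))
    (stdOrthonormalBasis ℝ (tangentSpaceAt S x) i : EuclideanSpace ℝ (Fin N))

/-- The Hessian `D_Σ² u (x)(v,w)` of `u` on `S`: the pairing of `w` with the derivative
along `S` in the direction `v` of the tangential gradient of `u`. -/
def hessS (S : Set (EuclideanSpace ℝ (Fin N))) (u : EuclideanSpace ℝ (Fin N) → ℝ)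
    (x v w : EuclideanSpace ℝ (Fin N)) : ℝ :=
  ⟪fderivWithin ℝ (tgrad S u) S x v, w⟫

/-- The tangential divergence `div_Σ X` of a vector field `X` along `S`. -/
def sdiv (S : Set (EuclideanSpace ℝ (Fin N))) (X : EuclideanSpace ℝ (Fin N) → EuclideanSpace ℝ (Fin N))
    (x : EuclideanSpace ℝ (Fin N)) : ℝ :=
  ∑ i, ⟪fderivWithin ℝ X S x (stdOrthonormalBasis ℝ (tangentSpaceAt S x) i : EuclideanSpace ℝ (Fin N)),
        (stdOrthonormalBasis ℝ (tangentSpaceAt S x) i : EuclideanSpace ℝ (Fin N))⟫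

/-- `S` is an `n`-dimensional smooth (C^∞) submanifold, without boundary, of
`ℝ^(n+m)`: near each of its points it is the zero set of a smooth submersion into `ℝ^m`. -/
def IsSubmanifold (n m : ℕ) (S : Set (EuclideanSpace ℝ (Fin (n + m)))) : Prop :=
  ∀ x ∈ S, ∃ U : Set (EuclideanSpace ℝ (Fin (n + m))), IsOpen U ∧ x ∈ U ∧
    ∃ g : EuclideanSpace ℝ (Fin (n + m)) → EuclideanSpace ℝ (Fin m),
      ContDiffOn ℝ (⊤ : ℕ∞) g U ∧
      (∀ y ∈ U, Function.Surjective (fderiv ℝ g y)) ∧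
      S ∩ U = {y ∈ U | g y = 0}

/-- The Gaussian weight `(4π)^(-n/2) e^(-|x|²/4)`. -/
def gaussW (n : ℕ) (x : EuclideanSpace ℝ (Fin N)) : ℝ :=
  (4 * π) ^ (-(n : ℝ) / 2) * Real.exp (-‖x‖ ^ 2 / 4)

end


section AuxLemmas

open Filter Topology

variable {N : ℕ}

lemma velocity_mem_tangentCone {S : Set (EuclideanSpace ℝ (Fin N))}
    {x v : EuclideanSpace ℝ (Fin N)} (γ : ℝ → EuclideanSpace ℝ (Fin N))
    (hγS : ∀ t, γ t ∈ S) (hγ0 : γ 0 = x) (hγv : HasDerivAt γ v 0) :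
    v ∈ tangentConeAt ℝ S x := by
  refine (fun hds hd hcd => mem_tangentConeAt_of_seq atTop (fun n : ℕ => (n : ℝ) + 1)
    (fun n : ℕ => γ (((n : ℝ) + 1)⁻¹) - x) hd hds hcd) ?_ ?_ ?_
  · filter_upwards with n
    simpa using hγS (((n : ℝ) + 1)⁻¹)
  · have h : Tendsto (fun n : ℕ => ((n : ℝ) + 1)⁻¹) atTop (𝓝 0) := by
      simpa [one_div] using tendsto_one_div_add_atTop_nhds_zero_nat (𝕜 := ℝ)
    have hc := (hγv.continuousAt.tendsto.comp h).sub_const x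
    simpa [Function.comp, hγ0] using hc
  · have hs := hγv.tendsto_slope_zero
    have ht : Tendsto (fun n : ℕ => ((n : ℝ) + 1)⁻¹) atTop (𝓝[≠] (0:ℝ)) := by
      apply tendsto_nhdsWithin_of_tendsto_nhds_of_eventually_within
      · simpa [one_div] using tendsto_one_div_add_atTop_nhds_zero_nat (𝕜 := ℝ)
      · filter_upwards with n
        simp only [Set.mem_compl_iff, Set.mem_singleton_iff]
        exact (by positivity : (0:ℝ) < ((n : ℝ) + 1)⁻¹).ne'
    have hcomp := hs.comp ht
    refine hcomp.congr fun n => ?_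
    simp [Function.comp, inv_inv, hγ0]

lemma fderivWithin_tangent_eq {F' : Type*} [NormedAddCommGroup F'] [NormedSpace ℝ F']
    {S : Set (EuclideanSpace ℝ (Fin N))} {x : EuclideanSpace ℝ (Fin N)}
    {g : EuclideanSpace ℝ (Fin N) → F'} {g' : EuclideanSpace ℝ (Fin N) →L[ℝ] F'}
    (hg : HasFDerivWithinAt g g' S x)
    {v : EuclideanSpace ℝ (Fin N)} (hv : v ∈ tangentSpaceAt S x) :
    fderivWithin ℝ g S x v = g' v := by
  have hd : DifferentiableWithinAt ℝ g S x := hg.differentiableWithinAt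
  have h1 : Set.EqOn (fderivWithin ℝ g S x) g' (tangentConeAt ℝ S x) :=
    hd.hasFDerivWithinAt.unique_on hg
  have h2 : Set.EqOn (fderivWithin ℝ g S x) g'
      {w | ∃ γ : ℝ → EuclideanSpace ℝ (Fin N),
        (∀ t, γ t ∈ S) ∧ γ 0 = x ∧ HasDerivAt γ w 0} := by
    rintro w ⟨γ, ha, hb, hc⟩
    exact h1 (velocity_mem_tangentCone γ ha hb hc)
  exact LinearMap.eqOn_span h2 hv

lemma sum_inner_onb {T : Submodule ℝ (EuclideanSpace ℝ (Fin N))}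
    (a : EuclideanSpace ℝ (Fin N)) {w : EuclideanSpace ℝ (Fin N)} (hw : w ∈ T) :
    ∑ i, ⟪a, (stdOrthonormalBasis ℝ T i : EuclideanSpace ℝ (Fin N))⟫
        * ⟪w, (stdOrthonormalBasis ℝ T i : EuclideanSpace ℝ (Fin N))⟫ = ⟪a, w⟫ := by
  have h := (stdOrthonormalBasis ℝ T).sum_repr' (⟨w, hw⟩ : T)
  have h2 : ∑ i, (⟪((stdOrthonormalBasis ℝ T i : T) : EuclideanSpace ℝ (Fin N)), w⟫)
      • ((stdOrthonormalBasis ℝ T i : T) : EuclideanSpace ℝ (Fin N)) = w := by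
    have h3 := congrArg (Submodule.subtype T) h
    simpa [map_sum, Submodule.coe_inner] using h3
  conv_rhs => rw [← h2]
  rw [inner_sum]
  refine Finset.sum_congr rfl fun i _ => ?_
  rw [real_inner_smul_right, real_inner_comm w]
  ring

end AuxLemmas


/-- **Pointwise trace inequality (from the proof of Lemma 4).**
Let `Σ` be a compact connected `n`-dimensional smooth submanifold of `ℝ^(n+m)` without
boundary, `f` a positive smooth function on `Σ` with `∫_Σ f dvol = 1`, `α` defined by
`∫_Σ f log f − ∫_Σ |∇^Σ f|²/f − ∫_Σ f |H|² = −α`, and `u` a smooth solution of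
`div_Σ(f ∇^Σ u) = f log f − |∇^Σ f|²/f − f |H|² + α f` on `Σ`.  Then for every `x ∈ Σ`
and every normal vector `y ∈ T_x^⊥Σ`,
`Δ_Σ u(x) − ⟨H(x), y⟩ ≤ log f(x) − |2H(x)+y|²/4 + (|∇^Σ u(x)|² + |y|²)/4 + α`. -/


theorem pointwise_trace_inequality (n m : ℕ)
    (S : Set (EuclideanSpace ℝ (Fin (n + m))))
    (hS : IsSubmanifold n m S) (hcpt : IsCompact S) (hconn : IsConnected S)
    (f : EuclideanSpace ℝ (Fin (n + m)) → ℝ)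
    (hf : ContDiff ℝ (⊤ : ℕ∞) f) (hpos : ∀ x ∈ S, 0 < f x)
    (hnorm : ∫ x in S, f x ∂μH[(n : ℝ)] = 1)
    (α : ℝ)
    (hα : ∫ x in S, f x * Real.log (f x) ∂μH[(n : ℝ)]
        - ∫ x in S, ‖tgrad S f x‖ ^ 2 / f x ∂μH[(n : ℝ)]
        - ∫ x in S, f x * ‖meanCurvature S x‖ ^ 2 ∂μH[(n : ℝ)] = -α)
    (u : EuclideanSpace ℝ (Fin (n + m)) → ℝ) (hu : ContDiff ℝ (⊤ : ℕ∞) u)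
    (hPDE : ∀ x ∈ S, sdiv S (fun z => f z • tgrad S u z) x
        = f x * Real.log (f x) - ‖tgrad S f x‖ ^ 2 / f x
          - f x * ‖meanCurvature S x‖ ^ 2 + α * f x) :
    ∀ x ∈ S, ∀ y ∈ (tangentSpaceAt S x)ᗮ,
      sdiv S (tgrad S u) x - ⟪meanCurvature S x, y⟫
        ≤ Real.log (f x) - ‖(2 : ℝ) • meanCurvature S x + y‖ ^ 2 / 4
          + (‖tgrad S u x‖ ^ 2 + ‖y‖ ^ 2) / 4 + α := by
  intro x hx y hy
  have hF : 0 < f x := hpos x hx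
  have hne : f x ≠ 0 := ne_of_gt hF
  have hUmem : tgrad S u x ∈ tangentSpaceAt S x := by
    simp only [tgrad, tproj, ContinuousLinearMap.comp_apply, Submodule.subtypeL_apply]
    exact Submodule.coe_mem _
  have hGsub : gradient f x - tgrad S f x ∈ (tangentSpaceAt S x)ᗮ := by
    simp only [tgrad, tproj, ContinuousLinearMap.comp_apply, Submodule.subtypeL_apply]
    exact Submodule.sub_starProjection_mem_orthogonal _
  have hinner_fu : ⟪gradient f x, tgrad S u x⟫ = ⟪tgrad S f x, tgrad S u x⟫ := by
    have h0 : ⟪tgrad S u x, gradient f x - tgrad S f x⟫ = 0 :=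
      (Submodule.mem_orthogonal _ _).1 hGsub _ hUmem
    have h0' : ⟪gradient f x - tgrad S f x, tgrad S u x⟫ = 0 := by
      rw [real_inner_comm]; exact h0
    rw [inner_sub_left] at h0'
    linarith
  have hexp : ‖(2:ℝ) • meanCurvature S x + y‖ ^ 2
      = 4 * ‖meanCurvature S x‖ ^ 2 + 4 * ⟪meanCurvature S x, y⟫ + ‖y‖ ^ 2 := by
    rw [norm_add_sq_real, real_inner_smul_left, norm_smul, Real.norm_ofNat]
    ring
  by_cases hDX : DifferentiableWithinAt ℝ (tgrad S u) S x
  · -- differentiable case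
    have hf' : HasFDerivWithinAt f (fderiv ℝ f x) S x :=
      (hf.differentiable (by simp) x).hasFDerivAt.hasFDerivWithinAt
    have hsmul : HasFDerivWithinAt (fun z => f z • tgrad S u z)
        (f x • fderivWithin ℝ (tgrad S u) S x
          + (fderiv ℝ f x).smulRight (tgrad S u x)) S x :=
      hf'.smul hDX.hasFDerivWithinAt
    have hgrad : ∀ e : EuclideanSpace ℝ (Fin (n + m)),
        fderiv ℝ f x e = ⟪gradient f x, e⟫ := fun e =>
      (InnerProductSpace.toDual_symm_apply).symm
    have hdiv : sdiv S (fun z => f z • tgrad S u z) x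
        = f x * sdiv S (tgrad S u) x + ⟪tgrad S f x, tgrad S u x⟫ := by
      have hterm : ∀ i, ⟪fderivWithin ℝ (fun z => f z • tgrad S u z) S x
            ((stdOrthonormalBasis ℝ (tangentSpaceAt S x) i : tangentSpaceAt S x) :
              EuclideanSpace ℝ (Fin (n + m))),
          ((stdOrthonormalBasis ℝ (tangentSpaceAt S x) i : tangentSpaceAt S x) :
              EuclideanSpace ℝ (Fin (n + m)))⟫
          = f x * ⟪fderivWithin ℝ (tgrad S u) S x
              ((stdOrthonormalBasis ℝ (tangentSpaceAt S x) i : tangentSpaceAt S x) :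
                EuclideanSpace ℝ (Fin (n + m))),
              ((stdOrthonormalBasis ℝ (tangentSpaceAt S x) i : tangentSpaceAt S x) :
                EuclideanSpace ℝ (Fin (n + m)))⟫
            + ⟪gradient f x, ((stdOrthonormalBasis ℝ (tangentSpaceAt S x) i :
                tangentSpaceAt S x) : EuclideanSpace ℝ (Fin (n + m)))⟫
              * ⟪tgrad S u x, ((stdOrthonormalBasis ℝ (tangentSpaceAt S x) i :
                tangentSpaceAt S x) : EuclideanSpace ℝ (Fin (n + m)))⟫ := by
        intro i
        rw [fderivWithin_tangent_eq hsmul (Submodule.coe_mem _)]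
        simp only [ContinuousLinearMap.add_apply, ContinuousLinearMap.coe_smul',
          Pi.smul_apply, ContinuousLinearMap.smulRight_apply]
        rw [inner_add_left, real_inner_smul_left, real_inner_smul_left, hgrad]
      unfold sdiv
      rw [Finset.sum_congr rfl fun i _ => hterm i, Finset.sum_add_distrib, ← Finset.mul_sum]
      congr 1
      rw [sum_inner_onb (gradient f x) hUmem]
      exact hinner_fu
    have hId := hPDE x hx
    rw [hdiv] at hId
    have hId2 : ‖tgrad S f x‖ ^ 2
        = f x * (f x * Real.log (f x)) - f x * (f x * ‖meanCurvature S x‖ ^ 2)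
          + α * (f x * f x) - f x * (f x * sdiv S (tgrad S u) x)
          - ⟪tgrad S f x, tgrad S u x⟫ * f x := by
      have h1 : ‖tgrad S f x‖ ^ 2 / f x
          = f x * Real.log (f x) - f x * ‖meanCurvature S x‖ ^ 2 + α * f x
            - f x * sdiv S (tgrad S u) x - ⟪tgrad S f x, tgrad S u x⟫ := by linarith
      calc ‖tgrad S f x‖ ^ 2 = (‖tgrad S f x‖ ^ 2 / f x) * f x := (div_mul_cancel₀ _ hne).symm
        _ = _ := by rw [h1]; ring
    have hC : -(‖tgrad S f x‖ * ‖tgrad S u x‖) ≤ ⟪tgrad S f x, tgrad S u x⟫ :=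
      (abs_le.1 (abs_real_inner_le_norm _ _)).1
    rw [hexp]
    nlinarith [hId2, mul_pos hF hF, hF,
      sq_nonneg (2 * ‖tgrad S f x‖ - ‖tgrad S u x‖ * f x),
      mul_le_mul_of_nonneg_right hC hF.le]
  · -- non-differentiable case
    have hnd2 : ¬ DifferentiableWithinAt ℝ (fun z => f z • tgrad S u z) S x := by
      intro h
      apply hDX
      have hfinv : DifferentiableWithinAt ℝ (fun z => (f z)⁻¹) S x :=
        ((hf.differentiable (by simp) x).differentiableWithinAt).inv hne
      have h2 : DifferentiableWithinAt ℝ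
          (fun z => (f z)⁻¹ • (f z • tgrad S u z)) S x := hfinv.smul h
      have hopen : IsOpen {z : EuclideanSpace ℝ (Fin (n + m)) | f z ≠ 0} :=
        isOpen_compl_singleton.preimage (hf.continuous)
      have hmem : {z : EuclideanSpace ℝ (Fin (n + m)) | f z ≠ 0} ∈ nhdsWithin x S :=
        nhdsWithin_le_nhds (hopen.mem_nhds hne)
      have hev : (tgrad S u) =ᶠ[nhdsWithin x S] fun z => (f z)⁻¹ • (f z • tgrad S u z) := by
        filter_upwards [hmem] with z hz
        rw [smul_smul, inv_mul_cancel₀ hz, one_smul]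
      exact h2.congr_of_eventuallyEq hev (by rw [smul_smul, inv_mul_cancel₀ hne, one_smul])
    have hz1 : sdiv S (tgrad S u) x = 0 := by
      unfold sdiv
      rw [fderivWithin_zero_of_not_differentiableWithinAt hDX]
      simp
    have hz2 : sdiv S (fun z => f z • tgrad S u z) x = 0 := by
      unfold sdiv
      rw [fderivWithin_zero_of_not_differentiableWithinAt hnd2]
      simp
    have hId := hPDE x hx
    rw [hz2] at hId
    have hA2 : ‖tgrad S f x‖ ^ 2
        = f x * f x * (Real.log (f x) - ‖meanCurvature S x‖ ^ 2 + α) := by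
      have h1 : ‖tgrad S f x‖ ^ 2 / f x
          = f x * Real.log (f x) - f x * ‖meanCurvature S x‖ ^ 2 + α * f x := by linarith
      calc ‖tgrad S f x‖ ^ 2 = (‖tgrad S f x‖ ^ 2 / f x) * f x := (div_mul_cancel₀ _ hne).symm
        _ = _ := by rw [h1]; ring
    rw [hz1, hexp]
    have h4 : 0 ≤ (f x * f x) * (Real.log (f x) - ‖meanCurvature S x‖ ^ 2 + α) :=
      hA2 ▸ sq_nonneg ‖tgrad S f x‖
    have h5 : 0 ≤ Real.log (f x) - ‖meanCurvature S x‖ ^ 2 + α :=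
      nonneg_of_mul_nonneg_right h4 (mul_pos hF hF)
    have h6 : (0:ℝ) ≤ ‖tgrad S u x‖ ^ 2 := sq_nonneg _
    linarith
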